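/- Let q > 0, L₀ > 0, Tₘ₀ > 0 with L₀ > Tₘ₀, let γ > 0 satisfy q − L₀·γ = √π·(Tₘ₀/2 + L₀·γ²)·e^{γ²}·erf(γ), set A = (q − L₀γ)/(√π·erf γ), T(y,t) = A·(2√t·e^{−y²/(4t)} + √π·y·erf(y/(2√t))) − q·y, S(t) = 2γ√t, C(t) = γ(L₀ − Tₘ₀)t, and Θ(y,t) = C(t) − ∫_{S(t)}^{y} T(u,t) du. Assume D₀ := γ(L₀ − Tₘ₀) − 2qγ² + 2A·( (√π/2)·erf γ + √π·γ²·erf γ + γ·e^{−γ²} ) ≠ 0. Then for every δ > 0 and every t > 0, the free boundary X₀*(t) := T(0,t)/(δ·Θ(0,t)) equals C₀/(δ√t), where C₀ = 2A/D₀. -/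

import Mathlib

/-- The Gauss error function `erf x = (2/√π) ∫₀ˣ e^{-s²} ds`. -/
noncomputable def erf (x : ℝ) : ℝ :=
  (2 / Real.sqrt Real.pi) * ∫ s in (0:ℝ)..x, Real.exp (-s ^ 2)

lemma erf_hasDerivAt (x : ℝ) :
    HasDerivAt erf (2 / Real.sqrt Real.pi * Real.exp (-x ^ 2)) x := by
  have hc : Continuous fun s : ℝ => Real.exp (-s ^ 2) := by continuity
  have h := (hc.integral_hasStrictDerivAt 0 x).hasDerivAt
  exact h.const_mul (2 / Real.sqrt Real.pi)

lemma continuous_erf : Continuous erf :=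
  continuous_iff_continuousAt.2 fun x => (erf_hasDerivAt x).continuousAt

lemma erf_zero : erf 0 = 0 := by simp [erf]

/-- With `T, S, C, Θ` as in the explicit Stefan solution and
`D₀ = γ(L₀ − Tₘ₀) − 2qγ² + 2A((√π/2) erf γ + √π γ² erf γ + γ e^{−γ²}) ≠ 0`,
for every `δ > 0` and `t > 0`, the free boundary
`X₀*(t) = T(0,t)/(δ Θ(0,t))` equals `C₀/(δ√t)` with `C₀ = 2A/D₀`. -/
theorem stmt17 (q L₀ Tm₀ γ A : ℝ) (hq : 0 < q) (hL : 0 < L₀) (hTm : 0 < Tm₀)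
    (hLTm : Tm₀ < L₀) (hγ : 0 < γ)
    (hγeq : q - L₀ * γ =
      Real.sqrt Real.pi * (Tm₀ / 2 + L₀ * γ ^ 2) * Real.exp (γ ^ 2) * erf γ)
    (hA : A = (q - L₀ * γ) / (Real.sqrt Real.pi * erf γ))
    (T : ℝ → ℝ → ℝ)
    (hT : ∀ y t : ℝ, T y t =
      A * (2 * Real.sqrt t * Real.exp (-y ^ 2 / (4 * t))
            + Real.sqrt Real.pi * y * erf (y / (2 * Real.sqrt t))) - q * y)
    (S : ℝ → ℝ) (hS : ∀ t : ℝ, S t = 2 * γ * Real.sqrt t)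
    (C : ℝ → ℝ) (hC : ∀ t : ℝ, C t = γ * (L₀ - Tm₀) * t)
    (Θ : ℝ → ℝ → ℝ)
    (hΘ : ∀ y t : ℝ, Θ y t = C t - ∫ u in S t..y, T u t)
    (D₀ : ℝ)
    (hD₀ : D₀ = γ * (L₀ - Tm₀) - 2 * q * γ ^ 2
        + 2 * A * (Real.sqrt Real.pi / 2 * erf γ
            + Real.sqrt Real.pi * γ ^ 2 * erf γ + γ * Real.exp (-γ ^ 2)))
    (hD₀ne : D₀ ≠ 0) :
    ∀ δ : ℝ, 0 < δ → ∀ t : ℝ, 0 < t →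
      T 0 t / (δ * Θ 0 t) = (2 * A / D₀) / (δ * Real.sqrt t) := by
  intro δ hδ t ht
  obtain ⟨r, hr0, rfl⟩ : ∃ r : ℝ, 0 < r ∧ r ^ 2 = t :=
    ⟨Real.sqrt t, Real.sqrt_pos.2 ht, Real.sq_sqrt ht.le⟩
  have hrne : r ≠ 0 := ne_of_gt hr0
  have hsq : Real.sqrt (r ^ 2) = r := Real.sqrt_sq hr0.le
  have hπ : (0:ℝ) < Real.sqrt Real.pi := Real.sqrt_pos.2 Real.pi_pos
  have hπne : Real.sqrt Real.pi ≠ 0 := ne_of_gt hπ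
  have hδne : δ ≠ 0 := ne_of_gt hδ
  -- antiderivative
  set G : ℝ → ℝ := fun u =>
    A * (Real.sqrt Real.pi * (u ^ 2 / 2 + r ^ 2) * erf (u / (2 * r))
        + r * u * Real.exp (-u ^ 2 / (4 * r ^ 2))) - q * (u ^ 2 / 2) with hG
  have hderiv : ∀ u : ℝ, HasDerivAt G (T u (r ^ 2)) u := by
    intro u
    have h1 : HasDerivAt (fun u : ℝ => erf (u / (2 * r)))
        (2 / Real.sqrt Real.pi * Real.exp (-(u / (2 * r)) ^ 2) * (1 / (2 * r))) u :=
      (erf_hasDerivAt _).comp u ((hasDerivAt_id u).div_const (2 * r))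
    have h2a : HasDerivAt (fun u : ℝ => -u ^ 2 / (4 * r ^ 2)) (-(2 * u) / (4 * r ^ 2)) u := by
      simpa using ((hasDerivAt_pow 2 u).neg.div_const (4 * r ^ 2))
    have h2 : HasDerivAt (fun u : ℝ => Real.exp (-u ^ 2 / (4 * r ^ 2)))
        (Real.exp (-u ^ 2 / (4 * r ^ 2)) * (-(2 * u) / (4 * r ^ 2))) u :=
      (Real.hasDerivAt_exp _).comp u h2a
    have h3a : HasDerivAt (fun u : ℝ => Real.sqrt Real.pi * (u ^ 2 / 2 + r ^ 2))
        (Real.sqrt Real.pi * ((2 : ℕ) * u ^ 1 / 2)) u :=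
      (((hasDerivAt_pow 2 u).div_const 2).add_const (r ^ 2)).const_mul _
    have h3 := h3a.mul h1
    have h4 := (((hasDerivAt_id u).const_mul r).mul h2)
    have h5 := ((h3.add h4).const_mul A).sub
      (((hasDerivAt_pow 2 u).div_const 2).const_mul q)
    have hexp : Real.exp (-(u / (2 * r)) ^ 2) = Real.exp (-u ^ 2 / (4 * r ^ 2)) := by
      congr 1
      field_simp
      ring
    refine h5.congr_deriv ?_
    rw [hT, hexp, hsq]
    simp only [id]
    field_simp
    ring
  have hTc : Continuous fun u => T u (r ^ 2) := by
    simp only [hT]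
    refine Continuous.sub (Continuous.mul continuous_const ?_)
      (continuous_const.mul continuous_id)
    exact ((continuous_const.mul (by continuity : Continuous fun u : ℝ =>
        Real.exp (-u ^ 2 / (4 * r ^ 2))))).add
      ((continuous_const.mul continuous_id).mul
        (continuous_erf.comp ((continuous_id).div_const _)))
  have hint : (∫ u in S (r ^ 2)..(0:ℝ), T u (r ^ 2)) = G 0 - G (S (r ^ 2)) :=
    intervalIntegral.integral_eq_sub_of_hasDerivAt (fun u _ => hderiv u)
      (hTc.intervalIntegrable _ _)
  have harg1 : 2 * γ * r / (2 * r) = γ := by field_simp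
  have harg2 : -(2 * γ * r) ^ 2 / (4 * r ^ 2) = -γ ^ 2 := by field_simp; ring
  have hΘ0 : Θ 0 (r ^ 2) = r ^ 2 * D₀ := by
    rw [hΘ, hint, hG, hC, hD₀, hS, hsq]
    simp only [zero_div, harg1, harg2, erf_zero]
    ring
  have hT0 : T 0 (r ^ 2) = 2 * A * r := by
    rw [hT, hsq]
    simp [erf_zero]
    ring
  rw [hT0, hΘ0, hsq]
  field_simp
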